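/- Fix p ∈ (0,1/2). There exists N ∈ ℕ such that for all n ≥ N, the mixing time of the chain Q_{n,p} satisfies τ_mix(Q_{n,p}) ≥ n/2. -/

import Mathlib

/-- Total variation distance between probability mass functions on a finite type. -/
noncomputable def dTV {α : Type*} [Fintype α] (p q : α → ℝ) : ℝ :=
  (∑ x, |p x - q x|) / 2

/-- The birth-and-death kernel `Q_{n,p}` on the states `{1,…,n}` (modelled by `Fin n`,
with `i : Fin n` representing the state `i+1`):
`Q(i,i+1) = p/2` for `i < n`, `Q(i,i−1) = (1−p)/2` for `i > 1`, `Q(i,i) = 1/2` for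
`1 < i < n`, `Q(1,1) = (2−p)/2`, `Q(n,n) = (1+p)/2`. -/
noncomputable def Qnp (n : ℕ) (p : ℝ) : Fin n → Fin n → ℝ := fun i j =>
  if (j : ℕ) = (i : ℕ) + 1 ∧ (i : ℕ) + 1 < n then p / 2
  else if (j : ℕ) + 1 = (i : ℕ) then (1 - p) / 2
  else if j = i then
    (if (i : ℕ) = 0 then (2 - p) / 2 else if (i : ℕ) + 1 = n then (1 + p) / 2 else 1 / 2)
  else 0

/-- The perturbed kernel `K_{n,p,ε}(i,j) = (1−ε) Q_{n,p}(i,j) + ε·1_{{j=n}}`. -/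
noncomputable def Knpe (n : ℕ) (p ε : ℝ) : Fin n → Fin n → ℝ := fun i j =>
  (1 - ε) * Qnp n p i j + (if (j : ℕ) + 1 = n then ε else 0)

/-- `t`-step transition probabilities of a kernel on a finite state space. -/
noncomputable def kpow {n : ℕ} (P : Fin n → Fin n → ℝ) : ℕ → Fin n → Fin n → ℝ
  | 0 => fun i j => if i = j then 1 else 0
  | t + 1 => fun i j => ∑ l, kpow P t i l * P l j

/-- The mixing time `τ_mix(P) = min{t : sup_i d_TV(P^t(i,·), π) < 1/4}`. -/
noncomputable def mixTime {n : ℕ} (P : Fin n → Fin n → ℝ) (pi : Fin n → ℝ) : ℕ :=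
  sInf {t : ℕ | ∀ i, dTV (kpow P t i) pi < 1/4}

section
variable {p : ℝ}

lemma Qnp_nonneg (hp0 : 0 < p) (hp1 : p < 1/2) {n : ℕ} (i j : Fin n) : 0 ≤ Qnp n p i j := by
  unfold Qnp; split_ifs <;> linarith

lemma Qnp_eq (n : ℕ) (p : ℝ) (i j : Fin n) :
    Qnp n p i j =
      (if (j:ℕ) = (i:ℕ)+1 ∧ (i:ℕ)+1 < n then p/2 else 0)
      + (if (j:ℕ)+1 = (i:ℕ) then (1-p)/2 else 0)
      + (if (j:ℕ) = (i:ℕ) then (if (i:ℕ)=0 then (2-p)/2 else if (i:ℕ)+1 = n then (1+p)/2 else 1/2) else 0) := by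
  unfold Qnp
  simp only [Fin.ext_iff]
  split_ifs <;> first | ring1 | (exfalso; omega)

lemma Qnp_rowsum (hn : 2 ≤ n) (i : Fin n) : ∑ j, Qnp n p i j = 1 := by
  have h : ∀ j : Fin n, Qnp n p i j = (fun k : ℕ =>
      (if k = (i:ℕ)+1 ∧ (i:ℕ)+1 < n then p/2 else 0)
      + (if k+1 = (i:ℕ) then (1-p)/2 else 0)
      + (if k = (i:ℕ) then (if (i:ℕ)=0 then (2-p)/2 else if (i:ℕ)+1 = n then (1+p)/2 else 1/2) else 0)) (j:ℕ) :=
    fun j => Qnp_eq n p i j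
  rw [Finset.sum_congr rfl (fun j _ => h j), Fin.sum_univ_eq_sum_range (fun k : ℕ =>
      (if k = (i:ℕ)+1 ∧ (i:ℕ)+1 < n then p/2 else 0)
      + (if k+1 = (i:ℕ) then (1-p)/2 else 0)
      + (if k = (i:ℕ) then (if (i:ℕ)=0 then (2-p)/2 else if (i:ℕ)+1 = n then (1+p)/2 else 1/2) else 0)) n]
  rw [Finset.sum_add_distrib, Finset.sum_add_distrib]
  have h1 : (∑ k ∈ Finset.range n, if k = (i:ℕ)+1 ∧ (i:ℕ)+1 < n then p/2 else 0)
      = if (i:ℕ)+1 < n then p/2 else 0 := by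
    by_cases hc : (i:ℕ)+1 < n
    · simp only [hc, and_true]
      rw [Finset.sum_ite_eq' (Finset.range n) ((i:ℕ)+1) (fun _ => p/2)]
      simp [hc]
    · simp [hc]
  have h2 : (∑ k ∈ Finset.range n, if k+1 = (i:ℕ) then (1-p)/2 else 0)
      = if 1 ≤ (i:ℕ) then (1-p)/2 else 0 := by
    by_cases hc : 1 ≤ (i:ℕ)
    · have : ∀ k, (k+1 = (i:ℕ)) = (k = (i:ℕ)-1) := by intro k; simp; omega
      simp only [this]
      rw [Finset.sum_ite_eq' (Finset.range n) ((i:ℕ)-1) (fun _ => (1-p)/2)]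
      have : (i:ℕ) - 1 < n := by have := i.isLt; omega
      simp [this, hc]
    · have : ∀ k ∈ Finset.range n, (if k+1 = (i:ℕ) then (1-p)/2 else 0) = 0 := by
        intro k _; rw [if_neg]; omega
      rw [Finset.sum_congr rfl this]
      simp [hc]
  have h3 : (∑ k ∈ Finset.range n, if k = (i:ℕ) then (if (i:ℕ)=0 then (2-p)/2 else if (i:ℕ)+1 = n then (1+p)/2 else 1/2) else 0)
      = (if (i:ℕ)=0 then (2-p)/2 else if (i:ℕ)+1 = n then (1+p)/2 else 1/2) := by
    rw [Finset.sum_ite_eq' (Finset.range n) ((i:ℕ)) _]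
    simp [i.isLt]
  rw [h1, h2, h3]
  have hin := i.isLt
  split_ifs <;> first | ring1 | (exfalso; omega)
end

section
variable {n : ℕ} {P : Fin n → Fin n → ℝ}

lemma kpow_zero (i j : Fin n) : kpow P 0 i j = if i = j then 1 else 0 := rfl
lemma kpow_succ (t : ℕ) (i j : Fin n) : kpow P (t+1) i j = ∑ l, kpow P t i l * P l j := rfl

lemma kpow_nonneg (hP : ∀ i j, 0 ≤ P i j) : ∀ t (i j : Fin n), 0 ≤ kpow P t i j
  | 0, i, j => by rw [kpow_zero]; split_ifs <;> norm_num
  | t+1, i, j => Finset.sum_nonneg fun l _ => mul_nonneg (kpow_nonneg hP t i l) (hP l j)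

lemma kpow_rowsum (hP : ∀ i, ∑ j, P i j = 1) : ∀ t (i : Fin n), ∑ j, kpow P t i j = 1
  | 0, i => by simp [kpow_zero]
  | t+1, i => by
    simp only [kpow_succ]
    rw [Finset.sum_comm]
    calc ∑ l, ∑ j, kpow P t i l * P l j = ∑ l, kpow P t i l * ∑ j, P l j := by
          simp [Finset.mul_sum]
      _ = ∑ l, kpow P t i l := by simp only [hP, mul_one]
      _ = 1 := kpow_rowsum hP t i

lemma kpow_add (s : ℕ) : ∀ t (i j : Fin n), kpow P (s+t) i j = ∑ l, kpow P s i l * kpow P t l j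
  | 0, i, j => by
    rw [Nat.add_zero]
    simp only [kpow_zero, mul_ite, mul_one, mul_zero]
    rw [Finset.sum_ite_eq' Finset.univ j (fun l => kpow P s i l)]
    simp
  | t+1, i, j => by
    rw [show s+(t+1) = (s+t)+1 by omega]
    simp only [kpow_succ]
    calc ∑ m, kpow P (s+t) i m * P m j
        = ∑ m, (∑ l, kpow P s i l * kpow P t l m) * P m j := by
          simp only [kpow_add s t]
      _ = ∑ m, ∑ l, kpow P s i l * kpow P t l m * P m j := by
          simp [Finset.sum_mul]
      _ = ∑ l, ∑ m, kpow P s i l * kpow P t l m * P m j := Finset.sum_comm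
      _ = ∑ l, kpow P s i l * ∑ m, kpow P t l m * P m j := by
          simp [Finset.mul_sum, mul_assoc]

lemma kpow_stat (pi : Fin n → ℝ) (hstat : ∀ j, ∑ i, pi i * P i j = pi j) :
    ∀ t (j : Fin n), ∑ i, pi i * kpow P t i j = pi j
  | 0, j => by
    simp only [kpow_zero, mul_ite, mul_one, mul_zero]
    rw [Finset.sum_ite_eq' Finset.univ j pi]
    simp
  | t+1, j => by
    simp only [kpow_succ]
    calc ∑ i, pi i * ∑ l, kpow P t i l * P l j
        = ∑ i, ∑ l, pi i * kpow P t i l * P l j := by simp [Finset.mul_sum, mul_assoc]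
      _ = ∑ l, ∑ i, pi i * kpow P t i l * P l j := Finset.sum_comm
      _ = ∑ l, (∑ i, pi i * kpow P t i l) * P l j := by simp [Finset.sum_mul]
      _ = ∑ l, pi l * P l j := by simp only [kpow_stat pi hstat t]
      _ = pi j := hstat j

lemma contraction (piv mu : Fin n → ℝ) (P' : Fin n → Fin n → ℝ) (δ : ℝ)
    (hminor : ∀ l j, δ * piv j ≤ P' l j)
    (hrow : ∀ l, ∑ j, P' l j = 1) (hπs : ∑ j, piv j = 1)
    (hstat : ∀ j, ∑ l, piv l * P' l j = piv j) (hμ : ∑ l, mu l = 1) :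
    ∑ j, |(∑ l, mu l * P' l j) - piv j| ≤ (1-δ) * ∑ l, |mu l - piv l| := by
  have key : ∀ j, (∑ l, mu l * P' l j) - piv j
      = ∑ l, (mu l - piv l) * (P' l j - δ * piv j) := by
    intro j
    have e0 : ∀ l, (mu l - piv l) * (P' l j - δ * piv j)
        = mu l * P' l j - piv l * P' l j - (δ * piv j) * mu l + (δ * piv j) * piv l := by
      intro l; ring
    simp only [e0]
    rw [Finset.sum_add_distrib, Finset.sum_sub_distrib, Finset.sum_sub_distrib,
      ← Finset.mul_sum, ← Finset.mul_sum, hstat j, hμ, hπs]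
    ring
  calc ∑ j, |(∑ l, mu l * P' l j) - piv j|
      = ∑ j, |∑ l, (mu l - piv l) * (P' l j - δ * piv j)| := by simp only [key]
    _ ≤ ∑ j, ∑ l, |mu l - piv l| * (P' l j - δ * piv j) := by
        apply Finset.sum_le_sum
        intro j _
        refine le_trans (Finset.abs_sum_le_sum_abs _ _) ?_
        apply Finset.sum_le_sum
        intro l _
        have h0 : (0:ℝ) ≤ P' l j - δ * piv j := by linarith [hminor l j]
        rw [abs_mul, abs_of_nonneg h0]
    _ = ∑ l, |mu l - piv l| * ∑ j, (P' l j - δ * piv j) := by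
        rw [Finset.sum_comm]
        exact Finset.sum_congr rfl fun l _ => (Finset.mul_sum _ _ _).symm
    _ = (1-δ) * ∑ l, |mu l - piv l| := by
        have hs : ∀ l, ∑ j, (P' l j - δ * piv j) = 1 - δ := by
          intro l
          rw [Finset.sum_sub_distrib, hrow l, ← Finset.mul_sum, hπs, mul_one]
        simp only [hs]
        rw [← Finset.sum_mul, mul_comm]
end

section
variable {p : ℝ} {n : ℕ}

lemma Qnp_diag_pos (hp0 : 0 < p) (hp1 : p < 1/2) (i : Fin n) : 0 < Qnp n p i i := by
  unfold Qnp
  split_ifs <;> first | linarith | (exfalso; omega) | simp_all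

lemma Qnp_up {i j : Fin n} (h : (i:ℕ)+1 < n) (hj : (j:ℕ) = (i:ℕ)+1) : Qnp n p i j = p/2 := by
  unfold Qnp; rw [if_pos ⟨hj, h⟩]

lemma Qnp_down {i j : Fin n} (hj : (j:ℕ)+1 = (i:ℕ)) : Qnp n p i j = (1-p)/2 := by
  unfold Qnp; rw [if_neg (by omega), if_pos hj]

lemma Qnp_far_zero {i j : Fin n} (h : (j:ℕ)+1 < (i:ℕ)) : Qnp n p i j = 0 := by
  unfold Qnp
  rw [if_neg (by omega), if_neg (by omega), if_neg (by rw [Fin.ext_iff]; omega)]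

lemma kpow_pos (hp0 : 0 < p) (hp1 : p < 1/2) :
    ∀ t (i j : Fin n), (i:ℕ) ≤ (j:ℕ) + t → (j:ℕ) ≤ (i:ℕ) + t → 0 < kpow (Qnp n p) t i j
  | 0, i, j, h1, h2 => by
    have : i = j := by rw [Fin.ext_iff]; omega
    subst this
    rw [kpow_zero, if_pos rfl]; norm_num
  | t+1, i, j, h1, h2 => by
    have hQ0 : ∀ a b : Fin n, 0 ≤ Qnp n p a b := Qnp_nonneg hp0 hp1
    have hk0 : ∀ s (a b : Fin n), 0 ≤ kpow (Qnp n p) s a b := kpow_nonneg hQ0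
    rw [kpow_succ]
    by_cases hc : (i:ℕ) ≤ (j:ℕ) + t ∧ (j:ℕ) ≤ (i:ℕ) + t
    · apply Finset.sum_pos'
      · intro l _; exact mul_nonneg (hk0 t i l) (hQ0 l j)
      · exact ⟨j, Finset.mem_univ j,
          mul_pos (kpow_pos hp0 hp1 t i j hc.1 hc.2) (Qnp_diag_pos hp0 hp1 j)⟩
    · rcases (by omega : (j:ℕ) = (i:ℕ) + t + 1 ∨ (i:ℕ) = (j:ℕ) + t + 1) with hd | hd
      · -- move up: l0 = j - 1
        have hjpos : 1 ≤ (j:ℕ) := by omega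
        set l0 : Fin n := ⟨(j:ℕ) - 1, by omega⟩ with hl0
        have hv : (l0:ℕ) = (j:ℕ) - 1 := rfl
        apply Finset.sum_pos'
        · intro l _; exact mul_nonneg (hk0 t i l) (hQ0 l j)
        · refine ⟨l0, Finset.mem_univ l0, mul_pos ?_ ?_⟩
          · exact kpow_pos hp0 hp1 t i l0 (by omega) (by omega)
          · rw [Qnp_up (i := l0) (j := j) (by omega) (by omega)]
            linarith
      · -- move down: l0 = j + 1
        set l0 : Fin n := ⟨(j:ℕ) + 1, by omega⟩ with hl0
        have hv : (l0:ℕ) = (j:ℕ) + 1 := rfl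
        apply Finset.sum_pos'
        · intro l _; exact mul_nonneg (hk0 t i l) (hQ0 l j)
        · refine ⟨l0, Finset.mem_univ l0, mul_pos ?_ ?_⟩
          · exact kpow_pos hp0 hp1 t i l0 (by omega) (by omega)
          · rw [Qnp_down (i := l0) (j := j) (by omega)]
            linarith

lemma kpow_last_zero (hn : 2 ≤ n) (last : Fin n) (hlast : (last:ℕ) = n - 1) :
    ∀ t (j : Fin n), (j:ℕ) + t + 1 < n → kpow (Qnp n p) t last j = 0
  | 0, j, hj => by
    rw [kpow_zero, if_neg (by rw [Fin.ext_iff]; omega)]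
  | t+1, j, hj => by
    rw [kpow_succ]
    apply Finset.sum_eq_zero
    intro l _
    by_cases hl : (l:ℕ) + t + 1 < n
    · rw [kpow_last_zero hn last hlast t l hl, zero_mul]
    · rw [Qnp_far_zero (by omega), mul_zero]
end

noncomputable def pinv {n : ℕ} (pi : Fin n → ℝ) : ℕ → ℝ :=
  fun k => if h : k < n then pi ⟨k,h⟩ else 0

section
variable {n : ℕ} {p : ℝ} {pi : Fin n → ℝ}

lemma pinv_eq (k : ℕ) (h : k < n) : pinv pi k = pi ⟨k,h⟩ := by simp [pinv, h]

lemma pinv_zero (k : ℕ) (h : n ≤ k) : pinv pi k = 0 := by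
  simp [pinv]; intro h'; omega

lemma pinv_nonneg (hpos : ∀ i, 0 ≤ pi i) (k : ℕ) : 0 ≤ pinv pi k := by
  unfold pinv; split_ifs; exacts [hpos _, le_refl 0]

lemma statbal (hstat : ∀ j, ∑ i, pi i * Qnp n p i j = pi j) (j : ℕ) (hj : j < n) :
    (if 1 ≤ j then pinv pi (j-1) * (p/2) else 0)
    + (if j+1 < n then pinv pi (j+1) * ((1-p)/2) else 0)
    + pinv pi j * (if j = 0 then (2-p)/2 else if j+1 = n then (1+p)/2 else 1/2)
    = pinv pi j := by
  have hs := hstat ⟨j, hj⟩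
  have h : ∀ i : Fin n, pi i * Qnp n p i ⟨j, hj⟩ = (fun k : ℕ =>
      (if j = k+1 ∧ k+1 < n then pinv pi k * (p/2) else 0)
      + (if j+1 = k then pinv pi k * ((1-p)/2) else 0)
      + (if j = k then pinv pi k * (if k = 0 then (2-p)/2 else if k+1 = n then (1+p)/2 else 1/2) else 0)) (i:ℕ) := by
    intro i
    rw [Qnp_eq, ← pinv_eq (pi := pi) (i:ℕ) i.isLt]
    simp only [Fin.val_mk, mul_add, mul_ite, mul_zero]
  rw [Finset.sum_congr rfl (fun i _ => h i)] at hs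
  rw [Fin.sum_univ_eq_sum_range (fun k : ℕ =>
      (if j = k+1 ∧ k+1 < n then pinv pi k * (p/2) else 0)
      + (if j+1 = k then pinv pi k * ((1-p)/2) else 0)
      + (if j = k then pinv pi k * (if k = 0 then (2-p)/2 else if k+1 = n then (1+p)/2 else 1/2) else 0)) n] at hs
  rw [Finset.sum_add_distrib, Finset.sum_add_distrib] at hs
  have e1 : (∑ k ∈ Finset.range n, if j = k+1 ∧ k+1 < n then pinv pi k * (p/2) else 0)
      = if 1 ≤ j then pinv pi (j-1) * (p/2) else 0 := by
    by_cases hc : 1 ≤ j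
    · have hcong : ∀ k ∈ Finset.range n,
          (if j = k+1 ∧ k+1 < n then pinv pi k * (p/2) else 0)
          = (if k = j-1 then pinv pi k * (p/2) else 0) := by
        intro k hk
        rw [Finset.mem_range] at hk
        by_cases h1 : k = j - 1
        · rw [if_pos (by omega), if_pos h1]
        · rw [if_neg (by omega), if_neg h1]
      rw [Finset.sum_congr rfl hcong,
        Finset.sum_ite_eq' (Finset.range n) (j-1) (fun k => pinv pi k * (p/2)),
        if_pos (Finset.mem_range.mpr (by omega)), if_pos hc]
    · rw [if_neg hc]
      apply Finset.sum_eq_zero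
      intro k _
      rw [if_neg (by omega)]
  have e2 : (∑ k ∈ Finset.range n, if j+1 = k then pinv pi k * ((1-p)/2) else 0)
      = if j+1 < n then pinv pi (j+1) * ((1-p)/2) else 0 := by
    rw [Finset.sum_ite_eq (Finset.range n) (j+1) (fun k => pinv pi k * ((1-p)/2))]
    by_cases hc : j+1 < n
    · rw [if_pos (Finset.mem_range.mpr hc), if_pos hc]
    · rw [if_neg (fun hm => hc (Finset.mem_range.mp hm)), if_neg hc]
  have e3 : (∑ k ∈ Finset.range n, if j = k then pinv pi k * (if k = 0 then (2-p)/2 else if k+1 = n then (1+p)/2 else 1/2) else 0)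
      = pinv pi j * (if j = 0 then (2-p)/2 else if j+1 = n then (1+p)/2 else 1/2) := by
    rw [Finset.sum_ite_eq (Finset.range n) j
      (fun k => pinv pi k * (if k = 0 then (2-p)/2 else if k+1 = n then (1+p)/2 else 1/2)),
      if_pos (Finset.mem_range.mpr hj)]
  rw [e1, e2, e3] at hs
  rw [hs, pinv_eq j hj]

lemma detbal (hn : 2 ≤ n) (hstat : ∀ j, ∑ i, pi i * Qnp n p i j = pi j) :
    ∀ j : ℕ, j + 1 < n → pinv pi j * (p/2) = pinv pi (j+1) * ((1-p)/2) := by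
  intro j
  induction j with
  | zero =>
    intro h1
    have hb := statbal (p := p) hstat 0 (by omega)
    rw [if_neg (by omega), if_pos (by omega), if_pos rfl] at hb
    linarith
  | succ j ih =>
    intro h2
    have hb := statbal (p := p) hstat (j+1) (by omega)
    rw [if_pos (by omega), if_pos (by omega), if_neg (by omega), if_neg (by omega)] at hb
    have hdb := ih (by omega)
    simp only [Nat.add_sub_cancel] at hb
    linarith

lemma pinv_le_pow (hn : 2 ≤ n) (hp0 : 0 < p) (hp1 : p < 1/2)
    (hpos : ∀ i, 0 ≤ pi i) (hsum : ∑ i, pi i = 1)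
    (hstat : ∀ j, ∑ i, pi i * Qnp n p i j = pi j) :
    ∀ j : ℕ, pinv pi j ≤ (p/(1-p))^j := by
  have hr0 : 0 ≤ p/(1-p) := by apply div_nonneg <;> linarith
  intro j
  induction j with
  | zero =>
    simp only [pow_zero]
    rw [pinv_eq 0 (by omega)]
    calc pi ⟨0, by omega⟩ ≤ ∑ i, pi i :=
      Finset.single_le_sum (fun i _ => hpos i) (Finset.mem_univ _)
      _ = 1 := hsum
  | succ j ih =>
    by_cases hc : j + 1 < n
    · have hdb := detbal hn hstat j hc
      have h1p : (0:ℝ) < 1 - p := by linarith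
      have : pinv pi (j+1) = pinv pi j * (p/(1-p)) := by
        field_simp at hdb ⊢
        linarith
      rw [this, pow_succ]
      exact mul_le_mul_of_nonneg_right ih hr0
    · rw [pinv_zero (j+1) (by omega)]
      exact pow_nonneg hr0 _
end

lemma geom_range_le {r : ℝ} (hr0 : 0 ≤ r) (hr1 : r < 1) (N : ℕ) :
    ∑ i ∈ Finset.range N, r^i ≤ 1/(1-r) := by
  rw [geom_sum_eq (by linarith : r ≠ 1)]
  have h1 : (0:ℝ) < 1 - r := by linarith
  have h2 : (r^N - 1)/(r-1) = (1 - r^N)/(1-r) := by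
    rw [← neg_div_neg_eq]; ring_nf
  rw [h2]
  gcongr
  have := pow_nonneg hr0 N
  linarith

lemma top_mass_le {n : ℕ} {p : ℝ} {pi : Fin n → ℝ} (hn : 2 ≤ n) (hp0 : 0 < p) (hp1 : p < 1/2)
    (hpos : ∀ i, 0 ≤ pi i) (hsum : ∑ i, pi i = 1)
    (hstat : ∀ j, ∑ i, pi i * Qnp n p i j = pi j) (k : ℕ) :
    ∑ j ∈ Finset.univ.filter (fun j : Fin n => k ≤ (j:ℕ)), pi j
      ≤ (p/(1-p))^k / (1-(p/(1-p))) := by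
  set r := p/(1-p) with hrdef
  have h1p : (0:ℝ) < 1 - p := by linarith
  have hr0 : 0 ≤ r := by apply div_nonneg <;> linarith
  have hr1 : r < 1 := by rw [hrdef, div_lt_one h1p]; linarith
  have step1 : ∑ j ∈ Finset.univ.filter (fun j : Fin n => k ≤ (j:ℕ)), pi j
      ≤ ∑ j ∈ Finset.univ.filter (fun j : Fin n => k ≤ (j:ℕ)), r^(j:ℕ) := by
    apply Finset.sum_le_sum
    intro j _
    rw [← pinv_eq (pi := pi) (j:ℕ) j.isLt]
    exact pinv_le_pow hn hp0 hp1 hpos hsum hstat (j:ℕ)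
  have step2 : ∑ j ∈ Finset.univ.filter (fun j : Fin n => k ≤ (j:ℕ)), r^(j:ℕ)
      = ∑ m ∈ (Finset.univ.filter (fun j : Fin n => k ≤ (j:ℕ))).map Fin.valEmbedding, r^m := by
    rw [Finset.sum_map]
    rfl
  have step3 : ∑ m ∈ (Finset.univ.filter (fun j : Fin n => k ≤ (j:ℕ))).map Fin.valEmbedding, r^m
      ≤ ∑ m ∈ Finset.Ico k n, r^m := by
    apply Finset.sum_le_sum_of_subset_of_nonneg
    · intro m hm
      simp only [Finset.mem_map, Finset.mem_filter, Finset.mem_univ, true_and,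
        Fin.valEmbedding_apply] at hm
      obtain ⟨j, hj1, hj2⟩ := hm
      rw [Finset.mem_Ico]
      exact ⟨hj2 ▸ hj1, hj2 ▸ j.isLt⟩
    · intro m _ _
      exact pow_nonneg hr0 m
  have step4 : ∑ m ∈ Finset.Ico k n, r^m ≤ r^k / (1-r) := by
    rw [Finset.sum_Ico_eq_sum_range]
    have : ∀ m, r^(k+m) = r^k * r^m := fun m => pow_add r k m
    simp only [this, ← Finset.mul_sum]
    rw [div_eq_mul_one_div]
    exact mul_le_mul_of_nonneg_left (geom_range_le hr0 hr1 _) (pow_nonneg hr0 k)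
  calc _ ≤ _ := step1
    _ = _ := step2
    _ ≤ _ := step3
    _ ≤ _ := step4

/-- For fixed `p ∈ (0,1/2)` there is `N` such that for all `n ≥ N`,
the mixing time of `Q_{n,p}` (with stationary distribution `π`) is at least `n/2`. -/
theorem stmt9 (p : ℝ) (hp : p ∈ Set.Ioo (0 : ℝ) (1/2)) :
    ∃ N : ℕ, ∀ n : ℕ, N ≤ n → ∀ pi : Fin n → ℝ,
      (∀ i, 0 ≤ pi i) → (∑ i, pi i = 1) →
      (∀ j, ∑ i, pi i * Qnp n p i j = pi j) →
      (n : ℝ) / 2 ≤ (mixTime (Qnp n p) pi : ℝ) := by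
  obtain ⟨hp0, hp1⟩ := hp
  have h1p : (0:ℝ) < 1 - p := by linarith
  set r := p/(1-p) with hrdef
  have hr0 : 0 < r := div_pos hp0 h1p
  have hr1 : r < 1 := by rw [hrdef, div_lt_one h1p]; linarith
  obtain ⟨M, hM⟩ := exists_pow_lt_of_lt_one (show (0:ℝ) < (1-r)/2 by linarith) hr1
  refine ⟨2*M+4, ?_⟩
  intro n hn pi hpos hsum hstat
  have hn2 : 2 ≤ n := by omega
  have hQ0 : ∀ i j : Fin n, 0 ≤ Qnp n p i j := Qnp_nonneg hp0 hp1
  have hQrow : ∀ i : Fin n, ∑ j, Qnp n p i j = 1 := Qnp_rowsum hn2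
  have hpile1 : ∀ j : Fin n, pi j ≤ 1 := by
    intro j
    calc pi j ≤ ∑ i, pi i := Finset.single_le_sum (fun i _ => hpos i) (Finset.mem_univ j)
      _ = 1 := hsum
  set S := {t : ℕ | ∀ i, dTV (kpow (Qnp n p) t i) pi < 1/4} with hSdef
  -- Part 1: S is nonempty.
  have hSne : S.Nonempty := by
    set m := n - 1 with hm
    have hkpos : ∀ l j : Fin n, 0 < kpow (Qnp n p) m l j := by
      intro l j
      have hl := l.isLt; have hj := j.isLt
      exact kpow_pos hp0 hp1 m l j (by omega) (by omega)
    have i0 : Fin n := ⟨0, by omega⟩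
    obtain ⟨q0, _, hq0⟩ := Finset.exists_min_image Finset.univ
      (fun q : Fin n × Fin n => kpow (Qnp n p) m q.1 q.2) ⟨(i0,i0), Finset.mem_univ _⟩
    set δ := kpow (Qnp n p) m q0.1 q0.2 with hδdef
    have hδpos : 0 < δ := hkpos _ _
    have hδle : ∀ l j : Fin n, δ ≤ kpow (Qnp n p) m l j :=
      fun l j => hq0 (l,j) (Finset.mem_univ _)
    have hk01 : ∀ l j : Fin n, kpow (Qnp n p) m l j ≤ 1 := by
      intro l j
      calc kpow (Qnp n p) m l j ≤ ∑ j', kpow (Qnp n p) m l j' :=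
        Finset.single_le_sum (fun j' _ => kpow_nonneg hQ0 m l j') (Finset.mem_univ j)
        _ = 1 := kpow_rowsum hQrow m l
    have hδ1 : δ ≤ 1 := le_trans (hδle i0 i0) (hk01 i0 i0)
    have hminor : ∀ l j : Fin n, δ * pi j ≤ kpow (Qnp n p) m l j := by
      intro l j
      calc δ * pi j ≤ δ * 1 := mul_le_mul_of_nonneg_left (hpile1 j) hδpos.le
        _ = δ := mul_one δ
        _ ≤ _ := hδle l j
    have hit : ∀ k (i : Fin n), ∑ j, |kpow (Qnp n p) (m*k) i j - pi j| ≤ (1-δ)^k * 2 := by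
      intro k
      induction k with
      | zero =>
        intro i
        rw [Nat.mul_zero, pow_zero, one_mul]
        calc ∑ j, |kpow (Qnp n p) 0 i j - pi j|
            ≤ ∑ j, (kpow (Qnp n p) 0 i j + pi j) := by
              apply Finset.sum_le_sum
              intro j _
              have h1 := kpow_nonneg hQ0 0 i j
              have h2 := hpos j
              exact abs_le.mpr ⟨by linarith, by linarith⟩
          _ = 2 := by
              rw [Finset.sum_add_distrib, kpow_rowsum hQrow 0 i, hsum]; norm_num
      | succ k ih =>
        intro i
        have hrw : ∀ j, kpow (Qnp n p) (m*(k+1)) i j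
            = ∑ l, kpow (Qnp n p) (m*k) i l * kpow (Qnp n p) m l j := by
          intro j
          rw [show m*(k+1) = m*k + m by ring]
          exact kpow_add (m*k) m i j
        simp only [hrw]
        calc ∑ j, |(∑ l, kpow (Qnp n p) (m*k) i l * kpow (Qnp n p) m l j) - pi j|
            ≤ (1-δ) * ∑ l, |kpow (Qnp n p) (m*k) i l - pi l| :=
              contraction pi (kpow (Qnp n p) (m*k) i) (kpow (Qnp n p) m) δ hminor
                (kpow_rowsum hQrow m) hsum (kpow_stat pi hstat m)
                (kpow_rowsum hQrow (m*k) i)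
          _ ≤ (1-δ) * ((1-δ)^k * 2) := mul_le_mul_of_nonneg_left (ih i) (by linarith)
          _ = (1-δ)^(k+1) * 2 := by ring
    obtain ⟨k0, hk0⟩ := exists_pow_lt_of_lt_one (show (0:ℝ) < 1/4 by norm_num)
      (show 1-δ < 1 by linarith)
    refine ⟨m*k0, ?_⟩
    intro i
    unfold dTV
    have := hit k0 i
    calc (∑ j, |kpow (Qnp n p) (m*k0) i j - pi j|)/2 ≤ ((1-δ)^k0 * 2)/2 := by linarith
      _ = (1-δ)^k0 := by ring
      _ < 1/4 := hk0
  -- Part 2: every element of S is at least n/2.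
  have hmem : ∀ t ∈ S, (n:ℝ)/2 ≤ (t:ℝ) := by
    intro t ht
    by_contra hlt
    push_neg at hlt
    have h2t : 2*t + 1 ≤ n := by
      have : (2:ℝ)*t < n := by linarith
      have : ((2*t : ℕ) : ℝ) < (n:ℝ) := by push_cast; linarith
      have := Nat.cast_lt.mp this
      omega
    set k := n - 1 - t with hk
    have hkM : M ≤ k := by omega
    set last : Fin n := ⟨n-1, by omega⟩ with hlast
    have hdtv := ht last
    set Alow := Finset.univ.filter (fun j : Fin n => (j:ℕ) + t + 1 < n) with hAlow
    have hzero : ∀ j ∈ Alow, kpow (Qnp n p) t last j = 0 := by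
      intro j hj
      rw [hAlow, Finset.mem_filter] at hj
      exact kpow_last_zero hn2 last rfl t j hj.2
    -- mass of complement is small
    have htop : ∑ j ∈ Finset.univ.filter (fun j : Fin n => ¬((j:ℕ) + t + 1 < n)), pi j < 1/2 := by
      have hsub : Finset.univ.filter (fun j : Fin n => ¬((j:ℕ) + t + 1 < n))
          ⊆ Finset.univ.filter (fun j : Fin n => k ≤ (j:ℕ)) := by
        intro j hj
        rw [Finset.mem_filter] at hj ⊢
        exact ⟨Finset.mem_univ j, by omega⟩
      calc ∑ j ∈ Finset.univ.filter (fun j : Fin n => ¬((j:ℕ) + t + 1 < n)), pi j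
          ≤ ∑ j ∈ Finset.univ.filter (fun j : Fin n => k ≤ (j:ℕ)), pi j :=
            Finset.sum_le_sum_of_subset_of_nonneg hsub (fun j _ _ => hpos j)
        _ ≤ r^k / (1-r) := top_mass_le hn2 hp0 hp1 hpos hsum hstat k
        _ ≤ r^M / (1-r) := by
            exact div_le_div_of_nonneg_right (pow_le_pow_of_le_one hr0.le hr1.le hkM) (by linarith)
        _ < ((1-r)/2) / (1-r) :=
            (div_lt_div_iff_of_pos_right (by linarith : (0:ℝ) < 1 - r)).mpr hM
        _ = 1/2 := by
            field_simp
            exact div_self (ne_of_gt (by linarith : (0:ℝ) < 1-r))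
    have hlow : 1/2 < ∑ j ∈ Alow, pi j := by
      have := Finset.sum_filter_add_sum_filter_not Finset.univ
        (fun j : Fin n => (j:ℕ) + t + 1 < n) pi
      rw [hsum] at this
      rw [hAlow]
      linarith
    have hbound : (∑ j ∈ Alow, pi j) ≤ ∑ j, |kpow (Qnp n p) t last j - pi j| := by
      calc ∑ j ∈ Alow, pi j = ∑ j ∈ Alow, |kpow (Qnp n p) t last j - pi j| := by
            apply Finset.sum_congr rfl
            intro j hj
            rw [hzero j hj, zero_sub, abs_neg, abs_of_nonneg (hpos j)]
        _ ≤ ∑ j, |kpow (Qnp n p) t last j - pi j| :=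
            Finset.sum_le_sum_of_subset_of_nonneg (Finset.subset_univ _)
              (fun j _ _ => abs_nonneg _)
    have : (1:ℝ)/4 < dTV (kpow (Qnp n p) t last) pi := by
      unfold dTV
      linarith
    linarith
  have hmm : sInf S ∈ S := Nat.sInf_mem hSne
  have h2 := hmem _ hmm
  have hfin : mixTime (Qnp n p) pi = sInf S := rfl
  rw [hfin]
  exact h2
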